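/- Let E be a real Hilbert space and let f : E → E be continuously differentiable with f'(u) self-adjoint for every u ∈ E. Define H : E → ℝ by H(u) = ∫₀¹ ⟨f(λ•u), u⟩ dλ. Then H is differentiable at every u ∈ E and its derivative satisfies H'(u)[g] = ⟨f(u), g⟩ for all g ∈ E; that is, f is the gradient of the potential H. -/

import Mathlib

set_option maxHeartbeats 1000000
set_option synthInstance.maxHeartbeats 200000


/-- If `f : E → E` is `C¹` with self-adjoint Fréchet derivative everywhere, then
`H(u) = ∫₀¹ ⟨f(λ•u), u⟩ dλ` is differentiable with `H'(u)[g] = ⟨f(u), g⟩`: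
`f` is the gradient of the potential `H`. -/
theorem gradient_of_potential {E : Type*} [NormedAddCommGroup E] [InnerProductSpace ℝ E]
    [CompleteSpace E] (f : E → E) (hf : ContDiff ℝ 1 f)
    (hself : ∀ u : E, ContinuousLinearMap.adjoint (fderiv ℝ f u) = fderiv ℝ f u)
    (H : E → ℝ)
    (hH : ∀ u : E, H u = ∫ t in (0:ℝ)..1, (inner ℝ (f (t • u)) u : ℝ)) :
    ∀ u : E, HasFDerivAt H (innerSL ℝ (f u)) u := by
  have hfc : Continuous f := hf.continuous
  have hf'c : Continuous (fderiv ℝ f) := hf.continuous_fderiv one_ne_zero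
  have hfd : ∀ x, HasFDerivAt f (fderiv ℝ f x) x :=
    fun x => (hf.differentiable one_ne_zero x).hasFDerivAt
  intro u
  set F' : E → ℝ → E →L[ℝ] ℝ := fun x t =>
    innerSL ℝ (f (t • x)) + t • ((innerSL ℝ x).comp (fderiv ℝ f (t • x))) with hF'def
  -- differentiability in the parameter
  have hFd : ∀ (t : ℝ) (x : E),
      HasFDerivAt (fun y : E => (inner ℝ (f (t • y)) y : ℝ)) (F' x t) x := by
    intro t x
    have h1 : HasFDerivAt (fun y : E => t • y) (t • ContinuousLinearMap.id ℝ E) x := by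
      exact (hasFDerivAt_id x).const_smul t
    have h2 : HasFDerivAt (fun y : E => f (t • y))
        ((fderiv ℝ f (t • x)).comp (t • ContinuousLinearMap.id ℝ E)) x :=
      (hfd (t • x)).comp x h1
    have h3 := h2.inner ℝ (hasFDerivAt_id x)
    refine h3.congr_fderiv ?_
    ext g
    simp [F', real_inner_comm, real_inner_smul_right]
  -- uniform bound near u
  set G : ℝ × E → ℝ := fun p => ‖f (p.1 • p.2)‖ + ‖p.2‖ * ‖fderiv ℝ f (p.1 • p.2)‖ with hGdef
  have hGcont : Continuous G := by fun_prop
  obtain ⟨p₀, hp₀K, hp₀⟩ := (isCompact_Icc.prod isCompact_singleton).exists_isMaxOn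
    (Set.Nonempty.prod ⟨0, Set.left_mem_Icc.2 zero_le_one⟩ ⟨u, rfl⟩)
    (hGcont.continuousOn (s := Set.Icc (0:ℝ) 1 ×ˢ ({u} : Set E)))
  have hKU : (Set.Icc (0:ℝ) 1 ×ˢ ({u} : Set E)) ⊆ G ⁻¹' Set.Iio (G p₀ + 1) := by
    intro p hp
    simpa using lt_of_le_of_lt (hp₀ hp) (lt_add_one (G p₀))
  obtain ⟨v, w, hv, hw, hIv, huw, hvw⟩ := generalized_tube_lemma isCompact_Icc
    isCompact_singleton (isOpen_Iio.preimage hGcont) hKU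
  obtain ⟨ε, hε, hball⟩ := Metric.isOpen_iff.1 hw u (huw rfl)
  have hbound : ∀ t ∈ Set.uIoc (0:ℝ) 1, ∀ x ∈ Metric.ball u ε, ‖F' x t‖ ≤ G p₀ + 1 := by
    intro t ht x hx
    rw [Set.uIoc_of_le zero_le_one] at ht
    have htIcc : t ∈ Set.Icc (0:ℝ) 1 := ⟨le_of_lt ht.1, ht.2⟩
    have hGlt : G (t, x) < G p₀ + 1 := hvw (Set.mk_mem_prod (hIv htIcc) (hball hx))
    have h1 : ‖F' x t‖ ≤ ‖innerSL ℝ (f (t • x))‖ +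
        ‖t • ((innerSL ℝ x).comp (fderiv ℝ f (t • x)))‖ := norm_add_le _ _
    have h2 : ‖innerSL ℝ (f (t • x))‖ = ‖f (t • x)‖ := by simp
    have h3 : ‖t • ((innerSL ℝ x).comp (fderiv ℝ f (t • x)))‖ ≤
        ‖x‖ * ‖fderiv ℝ f (t • x)‖ := by
      calc ‖t • ((innerSL ℝ x).comp (fderiv ℝ f (t • x)))‖
          ≤ ‖t‖ * ‖((innerSL ℝ x).comp (fderiv ℝ f (t • x)))‖ :=
            ContinuousLinearMap.opNorm_smul_le _ _
        _ ≤ 1 * (‖innerSL ℝ x‖ * ‖fderiv ℝ f (t • x)‖) := by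
            apply mul_le_mul (by rw [Real.norm_eq_abs, abs_of_nonneg htIcc.1]; exact htIcc.2)
              (ContinuousLinearMap.opNorm_comp_le _ _) (norm_nonneg _) zero_le_one
        _ = ‖x‖ * ‖fderiv ℝ f (t • x)‖ := by simp
    calc ‖F' x t‖ ≤ ‖f (t • x)‖ + ‖x‖ * ‖fderiv ℝ f (t • x)‖ := by
          rw [h2] at h1; exact h1.trans (by linarith)
      _ = G (t, x) := rfl
      _ ≤ G p₀ + 1 := le_of_lt hGlt
  -- differentiation under the integral sign
  have key : HasFDerivAt (fun x : E => ∫ t in (0:ℝ)..1, (inner ℝ (f (t • x)) x : ℝ))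
      (∫ t in (0:ℝ)..1, F' u t) u := by
    apply intervalIntegral.hasFDerivAt_integral_of_dominated_of_fderiv_le
      (hs := Metric.ball_mem_nhds u hε) (bound := fun _ => G p₀ + 1)
    · exact Filter.Eventually.of_forall fun x =>
        (Continuous.aestronglyMeasurable (Continuous.inner (by fun_prop) continuous_const))
    · exact (Continuous.intervalIntegrable
        (Continuous.inner (by fun_prop) continuous_const)) (a := 0) (b := 1)
    · apply Continuous.aestronglyMeasurable
      apply Continuous.add
      · exact (innerSL ℝ).continuous.comp (by fun_prop)
      · exact (continuous_id).smul
          ((continuous_const (y := innerSL ℝ u)).clm_comp (by fun_prop))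
    · exact MeasureTheory.ae_of_all _ hbound
    · exact intervalIntegrable_const
    · exact MeasureTheory.ae_of_all _ fun t _ x hx => hFd t x
  have hF'cont : Continuous (F' u) := by
    apply Continuous.add
    · exact (innerSL ℝ).continuous.comp (by fun_prop)
    · exact continuous_id.smul
        ((continuous_const (y := innerSL ℝ u)).clm_comp (by fun_prop))
  have hF'int : IntervalIntegrable (F' u) MeasureTheory.volume 0 1 :=
    hF'cont.intervalIntegrable _ _
  have heq : (∫ t in (0:ℝ)..1, F' u t) = innerSL ℝ (f u) := by
    ext g
    rw [ContinuousLinearMap.intervalIntegral_apply hF'int]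
    have hderiv : ∀ t : ℝ,
        HasDerivAt (fun s : ℝ => s * (inner ℝ (f (s • u)) g : ℝ)) (F' u t g) t := by
      intro t
      have hc : HasDerivAt (fun s : ℝ => s • u) u t := by
        simpa using (hasDerivAt_id t).smul_const u
      have h2 : HasDerivAt (fun s : ℝ => f (s • u)) (fderiv ℝ f (t • u) u) t :=
        (hfd (t • u)).comp_hasDerivAt t hc
      have h3 : HasDerivAt (fun s : ℝ => (inner ℝ (f (s • u)) g : ℝ))
          ((inner ℝ (fderiv ℝ f (t • u) u) g : ℝ)) t := by
        have := ((innerSL ℝ g).hasFDerivAt (x := f (t • u))).comp_hasDerivAt t h2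
        simpa [real_inner_comm, Function.comp_def] using this
      have h4 := (hasDerivAt_id t).mul h3
      refine h4.congr_deriv ?_
      have hadj : (inner ℝ u (fderiv ℝ f (t • u) g) : ℝ)
          = inner ℝ (fderiv ℝ f (t • u) u) g := by
        rw [← ContinuousLinearMap.adjoint_inner_left, hself]
      simp [F', hadj]
    have hcg : Continuous fun t : ℝ => F' u t g :=
      (ContinuousLinearMap.apply ℝ ℝ g).continuous.comp hF'cont
    rw [intervalIntegral.integral_eq_sub_of_hasDerivAt (fun t _ => hderiv t)
      (hcg.intervalIntegrable _ _)]
    simp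
  have hHfun : H = fun x : E => ∫ t in (0:ℝ)..1, (inner ℝ (f (t • x)) x : ℝ) := funext hH
  rw [hHfun, ← heq]
  exact key
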